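/- Stationarity identity in the proof of Theorem 4.3 (equations (33)–(34)): Assume ℓ_L < u_L and ℓ_R < u_R componentwise. Let (x*, y*) be a strongly stationary point of the LCQP, let x̄ ∈ Ω satisfy 𝓛ˡ(x̄) = 𝓛ˡ(x*) and 𝓡ˡ(x̄) = 𝓡ˡ(x*), let ρ > 0, and define ȳ_A = y*_A; ȳ_{L_i} = y*_{L_i} for i ∉ 𝓛ˡ(x̄) and ȳ_{L_i} = y*_{L_i} + ρ(R_i x̄ − ℓ_{R_i}) for i ∈ 𝓛ˡ(x̄); ȳ_{R_i} = y*_{R_i} for i ∉ 𝓡ˡ(x̄) and ȳ_{R_i} = y*_{R_i} + ρ(L_i x̄ − ℓ_{L_i}) for i ∈ 𝓡ˡ(x̄). Then Qx* + g + ρ(Lᵀ(Rx̄ − ℓ_R) + Rᵀ(Lx̄ − ℓ_L)) = Aᵀȳ_A + Lᵀȳ_L + Rᵀȳ_R, i.e. x* satisfies the stationarity equation of the convexified inner-loop subproblem ϑ_{x̄,ρ} with multipliers ȳ. -/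
import Mathlib


open Matrix
open scoped Classical

noncomputable section

structure LCQPData (n nA nc : ℕ) where
  Q : Matrix (Fin n) (Fin n) ℝ
  g : Fin n → ℝ
  A : Matrix (Fin nA) (Fin n) ℝ
  lA : Fin nA → ℝ
  uA : Fin nA → ℝ
  L : Matrix (Fin nc) (Fin n) ℝ
  R : Matrix (Fin nc) (Fin n) ℝ
  lL : Fin nc → ℝ
  uL : Fin nc → ℝ
  lR : Fin nc → ℝ
  uR : Fin nc → ℝ

variable {n nA nc m : ℕ}

/-- Lower-active set of the constraint `l ≤ M x ≤ u`. -/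
def actL (M : Matrix (Fin m) (Fin n) ℝ) (l u : Fin m → ℝ) (x : Fin n → ℝ) : Set (Fin m) :=
  {i | l i = M.mulVec x i ∧ M.mulVec x i < u i}

/-- Upper-active set of the constraint `l ≤ M x ≤ u`. -/
def actU (M : Matrix (Fin m) (Fin n) ℝ) (l u : Fin m → ℝ) (x : Fin n → ℝ) : Set (Fin m) :=
  {i | l i < M.mulVec x i ∧ M.mulVec x i = u i}

/-- Free (inactive) set of the constraint `l ≤ M x ≤ u`. -/
def actF (M : Matrix (Fin m) (Fin n) ℝ) (l u : Fin m → ℝ) (x : Fin n → ℝ) : Set (Fin m) :=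
  {i | l i < M.mulVec x i ∧ M.mulVec x i < u i}

/-- The relaxed feasible set Ω̃. -/
def LCQPData.relFeas (P : LCQPData n nA nc) : Set (Fin n → ℝ) :=
  {x | (∀ i, P.lA i ≤ P.A.mulVec x i ∧ P.A.mulVec x i ≤ P.uA i) ∧
       (∀ i, P.lL i ≤ P.L.mulVec x i ∧ P.L.mulVec x i ≤ P.uL i) ∧
       (∀ i, P.lR i ≤ P.R.mulVec x i ∧ P.R.mulVec x i ≤ P.uR i)}

/-- The penalty function φ. -/
def LCQPData.phi (P : LCQPData n nA nc) (x : Fin n → ℝ) : ℝ :=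
  (P.L.mulVec x - P.lL) ⬝ᵥ (P.R.mulVec x - P.lR)

/-- The LCQP feasible set Ω. -/
def LCQPData.feas (P : LCQPData n nA nc) : Set (Fin n → ℝ) :=
  {x ∈ P.relFeas | P.phi x = 0}

/-- ∇φ(x). -/
def LCQPData.gradPhi (P : LCQPData n nA nc) (x : Fin n → ℝ) : Fin n → ℝ :=
  P.Lᵀ.mulVec (P.R.mulVec x - P.lR) + P.Rᵀ.mulVec (P.L.mulVec x - P.lL)

/-- The quadratic objective f. -/
def LCQPData.obj (P : LCQPData n nA nc) (x : Fin n → ℝ) : ℝ :=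
  (1/2) * (x ⬝ᵥ P.Q.mulVec x) + P.g ⬝ᵥ x

/-- The penalized objective ψ_ρ. -/
def LCQPData.psi (P : LCQPData n nA nc) (ρ : ℝ) (x : Fin n → ℝ) : ℝ :=
  P.obj x + ρ * P.phi x

/-- ∇ψ_ρ(x). -/
def LCQPData.gradPsi (P : LCQPData n nA nc) (ρ : ℝ) (x : Fin n → ℝ) : Fin n → ℝ :=
  P.Q.mulVec x + P.g + ρ • P.gradPhi x

/-- The convexified inner-loop model ϑ_{x̄,ρ}. -/
def LCQPData.theta (P : LCQPData n nA nc) (ρ : ℝ) (xb x : Fin n → ℝ) : ℝ :=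
  (1/2) * (x ⬝ᵥ P.Q.mulVec x) + (P.g + ρ • P.gradPhi xb) ⬝ᵥ x

/-- Strong stationarity of the LCQP. -/
def LCQPData.StrongStat (P : LCQPData n nA nc) (x : Fin n → ℝ)
    (yA : Fin nA → ℝ) (yL yR : Fin nc → ℝ) : Prop :=
  x ∈ P.feas ∧
  P.Q.mulVec x + P.g = P.Aᵀ.mulVec yA + P.Lᵀ.mulVec yL + P.Rᵀ.mulVec yR ∧
  (∀ i ∈ actF P.A P.lA P.uA x, yA i = 0) ∧
  (∀ i ∈ actL P.A P.lA P.uA x, 0 ≤ yA i) ∧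
  (∀ i ∈ actU P.A P.lA P.uA x, yA i ≤ 0) ∧
  (∀ i ∈ actF P.L P.lL P.uL x, yL i = 0) ∧
  (∀ i ∈ actL P.L P.lL P.uL x ∩ actL P.R P.lR P.uR x, 0 ≤ yL i) ∧
  (∀ i ∈ actU P.L P.lL P.uL x, yL i ≤ 0) ∧
  (∀ i ∈ actF P.R P.lR P.uR x, yR i = 0) ∧
  (∀ i ∈ actL P.L P.lL P.uL x ∩ actL P.R P.lR P.uR x, 0 ≤ yR i) ∧
  (∀ i ∈ actU P.R P.lR P.uR x, yR i ≤ 0)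

/-- KKT point of the penalized problem min_{x ∈ Ω̃} ψ_ρ(x). -/
def LCQPData.PenKKT (P : LCQPData n nA nc) (ρ : ℝ) (x : Fin n → ℝ)
    (yA : Fin nA → ℝ) (yL yR : Fin nc → ℝ) : Prop :=
  x ∈ P.relFeas ∧
  P.Q.mulVec x + P.g + ρ • P.gradPhi x
    = P.Aᵀ.mulVec yA + P.Lᵀ.mulVec yL + P.Rᵀ.mulVec yR ∧
  (∀ i ∈ actF P.A P.lA P.uA x, yA i = 0) ∧
  (∀ i ∈ actL P.A P.lA P.uA x, 0 ≤ yA i) ∧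
  (∀ i ∈ actU P.A P.lA P.uA x, yA i ≤ 0) ∧
  (∀ i ∈ actF P.L P.lL P.uL x, yL i = 0) ∧
  (∀ i ∈ actL P.L P.lL P.uL x, 0 ≤ yL i) ∧
  (∀ i ∈ actU P.L P.lL P.uL x, yL i ≤ 0) ∧
  (∀ i ∈ actF P.R P.lR P.uR x, yR i = 0) ∧
  (∀ i ∈ actL P.R P.lR P.uR x, 0 ≤ yR i) ∧
  (∀ i ∈ actU P.R P.lR P.uR x, yR i ≤ 0)

/-- Stationarity identity in the proof of Theorem 4.3 (equations (33)–(34)). -/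
theorem stationarity_identity (n nA nc : ℕ) (P : LCQPData n nA nc)
    (hQ : P.Q.PosDef)
    (hLbnd : ∀ i, P.lL i < P.uL i) (hRbnd : ∀ i, P.lR i < P.uR i)
    (xs : Fin n → ℝ) (yA : Fin nA → ℝ) (yL yR : Fin nc → ℝ)
    (hss : P.StrongStat xs yA yL yR)
    (xb : Fin n → ℝ) (hxb : xb ∈ P.feas)
    (hL : actL P.L P.lL P.uL xb = actL P.L P.lL P.uL xs)
    (hR : actL P.R P.lR P.uR xb = actL P.R P.lR P.uR xs)
    (ρ : ℝ) (hρ : 0 < ρ) :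
    P.Q.mulVec xs + P.g +
        ρ • (P.Lᵀ.mulVec (P.R.mulVec xb - P.lR) + P.Rᵀ.mulVec (P.L.mulVec xb - P.lL))
      = P.Aᵀ.mulVec yA
        + P.Lᵀ.mulVec (fun i => if i ∈ actL P.L P.lL P.uL xb
            then yL i + ρ * (P.R.mulVec xb i - P.lR i) else yL i)
        + P.Rᵀ.mulVec (fun i => if i ∈ actL P.R P.lR P.uR xb
            then yR i + ρ * (P.L.mulVec xb i - P.lL i) else yR i) := by
  obtain ⟨⟨-, hLf, hRf⟩, hphi⟩ := hxb
  have hcomp : ∀ i, (P.L.mulVec xb i - P.lL i) * (P.R.mulVec xb i - P.lR i) = 0 := by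
    have hnn : ∀ i ∈ Finset.univ,
        0 ≤ (P.L.mulVec xb i - P.lL i) * (P.R.mulVec xb i - P.lR i) := fun i _ =>
      mul_nonneg (sub_nonneg.2 (hLf i).1) (sub_nonneg.2 (hRf i).1)
    have hsum : ∑ i, (P.L.mulVec xb i - P.lL i) * (P.R.mulVec xb i - P.lR i) = 0 := by
      simpa [LCQPData.phi, dotProduct, Pi.sub_apply] using hphi
    intro i
    exact (Finset.sum_eq_zero_iff_of_nonneg hnn).1 hsum i (Finset.mem_univ i)
  have hRzero : ∀ i, i ∉ actL P.L P.lL P.uL xb → P.R.mulVec xb i - P.lR i = 0 := by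
    intro i hi
    have hlt : P.lL i < P.L.mulVec xb i := by
      rcases lt_or_eq_of_le (hLf i).1 with h | h
      · exact h
      · exact absurd ⟨h, h ▸ hLbnd i⟩ hi
    exact (mul_eq_zero.1 (hcomp i)).resolve_left (sub_ne_zero.2 hlt.ne')
  have hLzero : ∀ i, i ∉ actL P.R P.lR P.uR xb → P.L.mulVec xb i - P.lL i = 0 := by
    intro i hi
    have hlt : P.lR i < P.R.mulVec xb i := by
      rcases lt_or_eq_of_le (hRf i).1 with h | h
      · exact h
      · exact absurd ⟨h, h ▸ hRbnd i⟩ hi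
    have := (mul_eq_zero.1 (hcomp i)).resolve_right (sub_ne_zero.2 hlt.ne')
    exact this
  have hfL : (fun i => if i ∈ actL P.L P.lL P.uL xb
        then yL i + ρ * (P.R.mulVec xb i - P.lR i) else yL i)
      = yL + ρ • (P.R.mulVec xb - P.lR) := by
    funext i
    by_cases hi : i ∈ actL P.L P.lL P.uL xb
    · simp [hi, Pi.add_apply, Pi.smul_apply, smul_eq_mul]
    · simp [hi, hRzero i hi, Pi.add_apply, Pi.smul_apply]
  have hfR : (fun i => if i ∈ actL P.R P.lR P.uR xb
        then yR i + ρ * (P.L.mulVec xb i - P.lL i) else yR i)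
      = yR + ρ • (P.L.mulVec xb - P.lL) := by
    funext i
    by_cases hi : i ∈ actL P.R P.lR P.uR xb
    · simp [hi, Pi.add_apply, Pi.smul_apply, smul_eq_mul]
    · simp [hi, hLzero i hi, Pi.add_apply, Pi.smul_apply]
  rw [hfL, hfR, Matrix.mulVec_add, Matrix.mulVec_add, Matrix.mulVec_smul, Matrix.mulVec_smul,
    hss.2.1]
  module
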